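/- Suppose additionally that f : E → ℝ is differentiable on an open convex set U containing x̄, that its gradient satisfies ‖∇f(u) − ∇f(v)‖ ≤ L‖u − v‖ for all u, v ∈ U and some L ≥ 0, that f̄ = f(x̄) and g = ∇f(x̄), and let x̂ ∈ U be a global minimizer of the regularized model q̂. Then, with F := f + φ, ared := F(x̄) − F(x̂), and pred := F(x̄) − q(x̂) (both finite real numbers), one has pred − ared ≤ (L + ‖B‖_op/2)‖x̂ − x̄‖², and consequently, for every c₁ ∈ (0,1), ared − c₁·pred ≥ (1/2)((1 − c₁)μ − 2L − ‖B‖_op)‖x̂ − x̄‖². -/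

import Mathlib

open scoped RealInnerProductSpace
open InnerProductSpace

-- descent-type lemma with constant L (crude bound via MVT)
theorem descent_aux {E : Type*} [NormedAddCommGroup E] [InnerProductSpace ℝ E] [CompleteSpace E]
    (f : E → ℝ) (f' : E → E) (U : Set E) (hU_conv : Convex ℝ U)
    (hdiff : ∀ u ∈ U, HasGradientAt f (f' u) u)
    (L : ℝ) (hL : 0 ≤ L)
    (hLip : ∀ u ∈ U, ∀ v ∈ U, ‖f' u - f' v‖ ≤ L * ‖u - v‖)
    (xb xhat : E) (hxbU : xb ∈ U) (hxhatU : xhat ∈ U) :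
    f xhat - f xb - ⟪f' xb, xhat - xb⟫ ≤ L * ‖xhat - xb‖ ^ 2 := by
  have hseg : segment ℝ xb xhat ⊆ U := hU_conv.segment_subset hxbU hxhatU
  set h : E → ℝ := fun y => f y - ⟪f' xb, y⟫ with hh
  have key : ‖h xhat - h xb‖ ≤ (L * ‖xhat - xb‖) * ‖xhat - xb‖ := by
    apply (convex_segment xb xhat).norm_image_sub_le_of_norm_hasFDerivWithin_le
      (f' := fun y => (toDual ℝ E (f' y) : E →L[ℝ] ℝ) - toDual ℝ E (f' xb))
      ?_ ?_ (left_mem_segment ℝ xb xhat) (right_mem_segment ℝ xb xhat)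
    · intro y hy
      have h1 : HasFDerivAt f (toDual ℝ E (f' y)) y :=
        (hdiff y (hseg hy)).hasFDerivAt
      have h2 : HasFDerivAt (fun z : E => ⟪f' xb, z⟫) (toDual ℝ E (f' xb)) y := by
        exact (toDual ℝ E (f' xb)).hasFDerivAt (x := y)
      exact (h1.sub h2).hasFDerivWithinAt
    · intro y hy
      have hy' : ‖y - xb‖ ≤ ‖xhat - xb‖ := by
        obtain ⟨a, b, ha, hb, hab, rfl⟩ := hy
        have : a • xb + b • xhat - xb = b • (xhat - xb) := by
          have : a = 1 - b := by linarith
          subst this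
          module
        rw [this, norm_smul]
        apply mul_le_of_le_one_left (norm_nonneg _)
        rw [Real.norm_eq_abs, abs_of_nonneg hb]; linarith
      have hnorm : ‖(toDual ℝ E (f' y) : E →L[ℝ] ℝ) - toDual ℝ E (f' xb)‖
          = ‖f' y - f' xb‖ := by
        rw [← map_sub]
        exact (toDual ℝ E).norm_map _
      rw [hnorm]
      calc ‖f' y - f' xb‖ ≤ L * ‖y - xb‖ := hLip y (hseg hy) xb hxbU
        _ ≤ L * ‖xhat - xb‖ := mul_le_mul_of_nonneg_left hy' hL
  rw [Real.norm_eq_abs] at key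
  have hval : h xhat - h xb = f xhat - f xb - ⟪f' xb, xhat - xb⟫ := by
    simp only [hh]
    rw [inner_sub_right]
    ring
  rw [hval] at key
  have h1 := (le_abs_self (f xhat - f xb - ⟪f' xb, xhat - xb⟫)).trans key
  calc f xhat - f xb - ⟪f' xb, xhat - xb⟫ ≤ L * ‖xhat - xb‖ * ‖xhat - xb‖ := h1
    _ = L * ‖xhat - xb‖ ^ 2 := by ring
theorem stmt11 {E : Type*} [NormedAddCommGroup E] [InnerProductSpace ℝ E]
    [FiniteDimensional ℝ E]
    (φ : E → EReal) (hφ_bot : ∀ x, φ x ≠ ⊥) (hφ_proper : ∃ x, φ x ≠ ⊤)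
    (xb : E) (hxb : φ xb ≠ ⊤) (fb : ℝ) (g : E)
    (B : E →L[ℝ] E) (hB : ∀ u v : E, ⟪B u, v⟫ = ⟪u, B v⟫)
    (μ : ℝ) (hμ : 0 < μ)
    (q qhat : E → EReal)
    (hq : ∀ x, q x = ((fb + ⟪g, x - xb⟫ + (1 / 2) * ⟪x - xb, B (x - xb)⟫ : ℝ) : EReal) + φ x)
    (hqhat : ∀ x, qhat x = q x + (((μ / 2) * ‖x - xb‖ ^ 2 : ℝ) : EReal))
    (f : E → ℝ) (f' : E → E) (U : Set E) (hU_open : IsOpen U) (hU_conv : Convex ℝ U)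
    (hxbU : xb ∈ U)
    (hdiff : ∀ u ∈ U, HasGradientAt f (f' u) u)
    (L : ℝ) (hL : 0 ≤ L)
    (hLip : ∀ u ∈ U, ∀ v ∈ U, ‖f' u - f' v‖ ≤ L * ‖u - v‖)
    (hfb : fb = f xb) (hg : g = f' xb)
    (xhat : E) (hxhatU : xhat ∈ U) (hmin : ∀ x, qhat xhat ≤ qhat x) :
    φ xhat ≠ ⊤ ∧
    ∀ ared pred : ℝ,
      ared = (f xb + (φ xb).toReal) - (f xhat + (φ xhat).toReal) →
      pred = (f xb + (φ xb).toReal) -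
        (fb + ⟪g, xhat - xb⟫ + (1 / 2) * ⟪xhat - xb, B (xhat - xb)⟫ + (φ xhat).toReal) →
      pred - ared ≤ (L + ‖B‖ / 2) * ‖xhat - xb‖ ^ 2 ∧
      ∀ c₁ ∈ Set.Ioo (0 : ℝ) 1,
        (1 / 2) * ((1 - c₁) * μ - 2 * L - ‖B‖) * ‖xhat - xb‖ ^ 2 ≤ ared - c₁ * pred := by
  set pb := (φ xb).toReal with hpbdef
  have hφb : φ xb = (pb : EReal) := (EReal.coe_toReal hxb (hφ_bot xb)).symm
  have hqxb : qhat xb = ((fb + pb : ℝ) : EReal) := by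
    rw [hqhat, hq, hφb]
    simp [← EReal.coe_add]
  have hmb := hmin xb
  rw [hqxb] at hmb
  -- φ xhat ≠ ⊤
  have hnt : φ xhat ≠ ⊤ := by
    intro htop
    rw [hqhat, hq, htop] at hmb
    simp only [EReal.coe_add_top, EReal.top_add_coe] at hmb
    exact (EReal.coe_lt_top _).not_ge hmb
  refine ⟨hnt, ?_⟩
  set ph := (φ xhat).toReal with hphdef
  have hφh : φ xhat = (ph : EReal) := (EReal.coe_toReal hnt (hφ_bot xhat)).symm
  -- key real inequality from minimality
  have hkey : fb + ⟪g, xhat - xb⟫ + (1 / 2) * ⟪xhat - xb, B (xhat - xb)⟫ + ph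
      + (μ / 2) * ‖xhat - xb‖ ^ 2 ≤ fb + pb := by
    have := hmb
    rw [hqhat, hq, hφh, ← EReal.coe_add, ← EReal.coe_add] at this
    exact_mod_cast this
  -- descent inequality
  have hdesc := descent_aux f f' U hU_conv hdiff L hL hLip xb xhat hxbU hxhatU
  rw [← hg] at hdesc
  -- bound on the quadratic form
  have hBd : |⟪xhat - xb, B (xhat - xb)⟫| ≤ ‖B‖ * ‖xhat - xb‖ ^ 2 := by
    calc |⟪xhat - xb, B (xhat - xb)⟫| ≤ ‖xhat - xb‖ * ‖B (xhat - xb)‖ :=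
          abs_real_inner_le_norm _ _
      _ ≤ ‖xhat - xb‖ * (‖B‖ * ‖xhat - xb‖) :=
          mul_le_mul_of_nonneg_left (B.le_opNorm _) (norm_nonneg _)
      _ = ‖B‖ * ‖xhat - xb‖ ^ 2 := by ring
  intro ared pred hared hpred
  obtain ⟨hBd1, hBd2⟩ := abs_le.1 hBd
  have hn2 : (0:ℝ) ≤ ‖xhat - xb‖ ^ 2 := sq_nonneg _
  constructor
  · subst hared hpred hfb
    nlinarith
  · intro c₁ hc₁
    obtain ⟨hc0, hc1⟩ := hc₁
    subst hared hpred hfb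
    nlinarith [mul_le_mul_of_nonneg_left hkey (le_of_lt (by linarith : (0:ℝ) < 1 - c₁)),
      mul_le_mul_of_nonneg_left hn2 (mul_nonneg hμ.le (by linarith : (0:ℝ) ≤ 1 - c₁))]
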